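/- For every symmetric 2×2 real matrix τ, Σ_{j=1}^{3} (n_jᵀ τ n_j) φ_HHJ^j = τ; in particular the Hellan–Herrmann–Johnson interpolation operator reproduces constant symmetric matrix fields on K. -/

import Mathlib

noncomputable section
open MeasureTheory

namespace PaperStmt

/-- Euclidean dot product on `ℝ²`. -/
def dotp (v w : ℝ × ℝ) : ℝ := v.1 * w.1 + v.2 * w.2

/-- Euclidean length on `ℝ²`. -/
def len (v : ℝ × ℝ) : ℝ := Real.sqrt (v.1 ^ 2 + v.2 ^ 2)

/-- Cross product (determinant) of two planar vectors. -/
def crossp (v w : ℝ × ℝ) : ℝ := v.1 * w.2 - v.2 * w.1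

/-- The vertices `p 0, p 1, p 2` form a nondegenerate triangle listed counterclockwise. -/
def Ccw (p : Fin 3 → ℝ × ℝ) : Prop := 0 < crossp (p 1 - p 0) (p 2 - p 0)

/-- Vector of the edge `e_i` opposite vertex `p i`, oriented counterclockwise
(from `p (i+1)` to `p (i−1)`). -/
def edgeVec (p : Fin 3 → ℝ × ℝ) (i : Fin 3) : ℝ × ℝ := p (i - 1) - p (i + 1)

/-- Length `|e_i|` of the edge opposite vertex `p i`. -/
def elen (p : Fin 3 → ℝ × ℝ) (i : Fin 3) : ℝ := len (edgeVec p i)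

/-- Unit tangent `t_i = (p_{i−1} − p_{i+1})/|e_i|` of edge `e_i`. -/
def tvec (p : Fin 3 → ℝ × ℝ) (i : Fin 3) : ℝ × ℝ := (elen p i)⁻¹ • edgeVec p i

/-- Outward unit normal `n_i` of edge `e_i` (clockwise rotation of the tangent,
which points outward for a counterclockwise triangle). -/
def nvec (p : Fin 3 → ℝ × ℝ) (i : Fin 3) : ℝ × ℝ := ((tvec p i).2, -(tvec p i).1)

/-- Interior angle `θ_i` of the triangle at the vertex `p i`. -/
def angleAt (p : Fin 3 → ℝ × ℝ) (i : Fin 3) : ℝ :=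
  Real.arccos (dotp (p (i + 1) - p i) (p (i - 1) - p i) /
    (len (p (i + 1) - p i) * len (p (i - 1) - p i)))

/-- Outer product `v wᵀ` of two planar (column) vectors, as a `2 × 2` matrix. -/
def outerProd (v w : ℝ × ℝ) : Matrix (Fin 2) (Fin 2) ℝ :=
  !![v.1 * w.1, v.1 * w.2; v.2 * w.1, v.2 * w.2]

/-- Basis matrices `φ_HHJ^i = −(1/(2 sin θ_{i−1} sin θ_{i+1})) (t_{i−1} t_{i+1}ᵀ + t_{i+1} t_{i−1}ᵀ)`
of the lowest-order Hellan–Herrmann–Johnson element. -/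
def phiHHJ (p : Fin 3 → ℝ × ℝ) (i : Fin 3) : Matrix (Fin 2) (Fin 2) ℝ :=
  (-(2 * Real.sin (angleAt p (i - 1)) * Real.sin (angleAt p (i + 1)))⁻¹) •
    (outerProd (tvec p (i - 1)) (tvec p (i + 1)) + outerProd (tvec p (i + 1)) (tvec p (i - 1)))

/-- The quadratic form `vᵀ τ v` of a `2 × 2` matrix on a planar vector. -/
def qf (τ : Matrix (Fin 2) (Fin 2) ℝ) (v : ℝ × ℝ) : ℝ :=
  v.1 * (τ 0 0 * v.1 + τ 0 1 * v.2) + v.2 * (τ 1 0 * v.1 + τ 1 1 * v.2)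

end PaperStmt

namespace HHJAux
open PaperStmt

lemma lagrange (u v : ℝ × ℝ) : (dotp u v)^2 + (crossp u v)^2 = (u.1^2+u.2^2)*(v.1^2+v.2^2) := by
  simp only [dotp, crossp]; ring

lemma len_pos (v : ℝ × ℝ) (h : v ≠ 0) : 0 < len v := by
  rcases v with ⟨x, y⟩
  have hx : x ≠ 0 ∨ y ≠ 0 := by
    by_contra hc; push_neg at hc; exact h (by simp [hc.1, hc.2, Prod.ext_iff])
  have : 0 < x ^ 2 + y ^ 2 := by rcases hx with h | h <;> positivity
  exact Real.sqrt_pos.2 this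

lemma len_sq (v : ℝ × ℝ) : (len v)^2 = v.1^2 + v.2^2 := Real.sq_sqrt (by positivity)

lemma len_sub_comm (u v : ℝ × ℝ) : len (u - v) = len (v - u) := by
  simp only [len, Prod.fst_sub, Prod.snd_sub]; ring_nf

lemma fin3_1 (i : Fin 3) : i - 1 - 1 = i + 1 := by fin_cases i <;> rfl
lemma fin3_2 (i : Fin 3) : i - 1 + 1 = i := by fin_cases i <;> rfl
lemma fin3_3 (i : Fin 3) : i + 1 + 1 = i - 1 := by fin_cases i <;> rfl
lemma fin3_4 (i : Fin 3) : i + 1 - 1 = i := by fin_cases i <;> rfl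

lemma cross_vertex (p : Fin 3 → ℝ × ℝ) (i : Fin 3) :
    crossp (p (i+1) - p i) (p (i-1) - p i) = crossp (p 1 - p 0) (p 2 - p 0) := by
  fin_cases i <;> simp [crossp, show (-1 : Fin 3) = 2 from rfl] <;> ring

lemma cross_edges (p : Fin 3 → ℝ × ℝ) (i : Fin 3) :
    crossp (edgeVec p i) (edgeVec p (i+1)) = crossp (p 1 - p 0) (p 2 - p 0) := by
  fin_cases i <;> simp [edgeVec, crossp, show (-1 : Fin 3) = 2 from rfl] <;> ring

lemma edge_ne (p : Fin 3 → ℝ × ℝ) (hp : Ccw p) (i : Fin 3) : edgeVec p i ≠ 0 := by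
  intro h
  have h0 : crossp (p 1 - p 0) (p 2 - p 0) = 0 := by
    rw [← cross_edges p i, h]; simp [crossp]
  have hp' : 0 < crossp (p 1 - p 0) (p 2 - p 0) := hp
  exact ne_of_gt hp' h0

lemma elen_pos (p : Fin 3 → ℝ × ℝ) (hp : Ccw p) (i : Fin 3) : 0 < elen p i :=
  len_pos _ (edge_ne p hp i)

lemma sin_angle (p : Fin 3 → ℝ × ℝ) (hp : Ccw p) (i : Fin 3) :
    Real.sin (angleAt p i) =
      crossp (p 1 - p 0) (p 2 - p 0) / (elen p (i - 1) * elen p (i + 1)) := by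
  have hu : len (p (i+1) - p i) = elen p (i - 1) := by
    rw [elen, edgeVec, fin3_1, fin3_2]
  have hv : len (p (i-1) - p i) = elen p (i + 1) := by
    rw [elen, edgeVec, fin3_4, fin3_3, len_sub_comm]
  have hc : crossp (p (i+1) - p i) (p (i-1) - p i) = crossp (p 1 - p 0) (p 2 - p 0) :=
    cross_vertex p i
  have hu0 : (0:ℝ) < len (p (i+1) - p i) := by
    rw [hu]; exact elen_pos p hp _
  have hv0 : (0:ℝ) < len (p (i-1) - p i) := by
    rw [hv]; exact elen_pos p hp _
  set u := p (i+1) - p i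
  set v := p (i-1) - p i
  have hLL : (len u * len v)^2 = (dotp u v)^2 + (crossp u v)^2 := by
    rw [mul_pow, len_sq, len_sq, ← lagrange]
  rw [angleAt, Real.sin_arccos]
  have key : 1 - (dotp u v / (len u * len v))^2 = (crossp u v / (len u * len v))^2 := by
    field_simp
    linarith [hLL]
  have hp' : 0 < crossp (p 1 - p 0) (p 2 - p 0) := hp
  rw [key, Real.sqrt_sq (by rw [hc]; exact div_nonneg hp'.le (mul_pos hu0 hv0).le), hc, hu, hv]

lemma outer_smul (a b : ℝ) (v w : ℝ × ℝ) :
    outerProd (a • v) (b • w) = (a * b) • outerProd v w := by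
  simp only [outerProd, Prod.smul_fst, Prod.smul_snd, smul_eq_mul]
  ext i j
  fin_cases i <;> fin_cases j <;>
    simp [Matrix.smul_apply] <;> ring

lemma phi_formula (p : Fin 3 → ℝ × ℝ) (hp : Ccw p) (i : Fin 3) :
    phiHHJ p i = (-(elen p i)^2 / (2 * (crossp (p 1 - p 0) (p 2 - p 0))^2)) •
      (outerProd (edgeVec p (i-1)) (edgeVec p (i+1)) +
       outerProd (edgeVec p (i+1)) (edgeVec p (i-1))) := by
  set D := crossp (p 1 - p 0) (p 2 - p 0) with hDdef
  have hD : 0 < D := hp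
  have hL0 := elen_pos p hp i
  have hL1 := elen_pos p hp (i-1)
  have hL2 := elen_pos p hp (i+1)
  have hs1 : Real.sin (angleAt p (i-1)) = D / (elen p (i+1) * elen p i) := by
    rw [sin_angle p hp (i-1), fin3_1, fin3_2]
  have hs2 : Real.sin (angleAt p (i+1)) = D / (elen p i * elen p (i-1)) := by
    rw [sin_angle p hp (i+1), fin3_4, fin3_3]
  rw [phiHHJ, hs1, hs2, tvec, tvec, outer_smul, outer_smul,
    mul_comm ((elen p (i+1))⁻¹) ((elen p (i-1))⁻¹), ← smul_add, smul_smul]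
  congr 1
  field_simp

lemma qf_smul (τ : Matrix (Fin 2) (Fin 2) ℝ) (c : ℝ) (v : ℝ × ℝ) :
    qf τ (c • v) = c^2 * qf τ v := by
  simp only [qf, Prod.smul_fst, Prod.smul_snd, smul_eq_mul]; ring

lemma qf_nvec (τ : Matrix (Fin 2) (Fin 2) ℝ) (p : Fin 3 → ℝ × ℝ) (i : Fin 3) :
    qf τ (nvec p i) =
      ((elen p i)⁻¹)^2 * qf τ ((edgeVec p i).2, -(edgeVec p i).1) := by
  have : nvec p i = (elen p i)⁻¹ • ((edgeVec p i).2, -(edgeVec p i).1) := by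
    simp only [nvec, tvec, Prod.smul_fst, Prod.smul_snd, smul_eq_mul, Prod.smul_def]
    exact Prod.ext rfl (by ring)
  rw [this, qf_smul]

end HHJAux

open PaperStmt in
/-- The HHJ interpolation reproduces constant symmetric matrix fields:
`Σ_{j=1}^{3} (n_jᵀ τ n_j) φ_HHJ^j = τ` for every symmetric `2 × 2` matrix `τ`. -/
theorem HHJ_reproduces_constants (p : Fin 3 → ℝ × ℝ) (hp : Ccw p)
    (τ : Matrix (Fin 2) (Fin 2) ℝ) (hτ : τ.IsSymm) :
    ∑ j : Fin 3, qf τ (nvec p j) • phiHHJ p j = τ := by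
  classical
  have hD : 0 < crossp (p 1 - p 0) (p 2 - p 0) := hp
  have hDne : crossp (p 1 - p 0) (p 2 - p 0) ≠ 0 := ne_of_gt hD
  have key : ∀ j : Fin 3, qf τ (nvec p j) • phiHHJ p j =
      (-(qf τ ((edgeVec p j).2, -(edgeVec p j).1)) /
          (2 * (crossp (p 1 - p 0) (p 2 - p 0))^2)) •
      (outerProd (edgeVec p (j-1)) (edgeVec p (j+1)) +
       outerProd (edgeVec p (j+1)) (edgeVec p (j-1))) := by
    intro j
    rw [HHJAux.qf_nvec, HHJAux.phi_formula p hp, smul_smul]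
    congr 1
    have hL : elen p j ≠ 0 := (HHJAux.elen_pos p hp j).ne'
    field_simp
  simp only [key]
  rw [Fin.sum_univ_three]
  have h10 : τ 1 0 = τ 0 1 := by
    have := congrFun (congrFun hτ 0) 1
    simpa using this
  have hDne' : ((p 1).1 - (p 0).1) * ((p 2).2 - (p 0).2) -
      ((p 1).2 - (p 0).2) * ((p 2).1 - (p 0).1) ≠ 0 := by
    simpa only [crossp, Prod.fst_sub, Prod.snd_sub] using hDne
  ext a b
  fin_cases a <;> fin_cases b <;>
  · simp only [Matrix.add_apply, Matrix.smul_apply, Matrix.of_apply, outerProd, edgeVec, crossp, qf,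
      show (0:Fin 3)-1=2 from rfl, show (0:Fin 3)+1=1 from rfl, show (1:Fin 3)-1=0 from rfl,
      show (1:Fin 3)+1=2 from rfl, show (2:Fin 3)-1=1 from rfl, show (2:Fin 3)+1=0 from rfl,
      Matrix.cons_val', Matrix.cons_val_zero, Matrix.cons_val_one, Matrix.head_cons,
      Matrix.empty_val', Matrix.cons_val_fin_one, smul_eq_mul,
      Prod.fst_sub, Prod.snd_sub, Fin.mk_zero, Fin.mk_one, Fin.isValue, h10]
    field_simp
    ring
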